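/- For right-continuous nondecreasing functions g₁, g₂ : [0,1] → [0,1], the L¹ distance between g₁ and g₂ equals the L¹ distance between their generalized inverses: ∫₀¹|g₁(t) − g₂(t)| dt = ∫₀¹|g₁⁻¹(t) − g₂⁻¹(t)| dt. -/

import Mathlib

open MeasureTheory
open scoped symmDiff

/-- Generalized inverse `g⁻¹(t) = inf{s ∈ [0,1] : g(s) > t}` of a nondecreasing
map `g : [0,1] → [0,1]`. -/
noncomputable def genInv (g : ℝ → ℝ) (t : ℝ) : ℝ :=
  sInf {s : ℝ | s ∈ Set.Icc (0:ℝ) 1 ∧ t < g s}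

open Set in
lemma genInv_mem {g : ℝ → ℝ} (h1 : g 1 = 1) {s : ℝ} (hs : s ∈ Ico (0:ℝ) 1) :
    genInv g s ∈ Icc (0:ℝ) 1 := by
  have hne : (1:ℝ) ∈ {u : ℝ | u ∈ Icc (0:ℝ) 1 ∧ s < g u} :=
    ⟨⟨zero_le_one, le_refl 1⟩, by rw [h1]; exact hs.2⟩
  constructor
  · exact Real.sInf_nonneg (fun x hx => hx.1.1)
  · exact csInf_le ⟨0, fun x hx => hx.1.1⟩ hne

open Set in
lemma slice_sandwich {g : ℝ → ℝ} (hm : Monotone g) (h1 : g 1 = 1) {s : ℝ}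
    (hs : s ∈ Ico (0:ℝ) 1) :
    Ioc (genInv g s) 1 ⊆ {t | t ∈ Icc (0:ℝ) 1 ∧ s < g t} ∧
      {t | t ∈ Icc (0:ℝ) 1 ∧ s < g t} ⊆ Icc (genInv g s) 1 := by
  have hne : ({u : ℝ | u ∈ Icc (0:ℝ) 1 ∧ s < g u}).Nonempty :=
    ⟨1, ⟨zero_le_one, le_refl 1⟩, by rw [h1]; exact hs.2⟩
  have hbdd : BddBelow {u : ℝ | u ∈ Icc (0:ℝ) 1 ∧ s < g u} := ⟨0, fun x hx => hx.1.1⟩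
  constructor
  · rintro t ⟨hat, ht1⟩
    obtain ⟨u, huS, hut⟩ := exists_lt_of_csInf_lt hne hat
    exact ⟨⟨le_trans huS.1.1 hut.le, ht1⟩, lt_of_lt_of_le huS.2 (hm hut.le)⟩
  · rintro t ⟨htI, hst⟩
    exact ⟨csInf_le hbdd ⟨htI, hst⟩, htI.2⟩

open Set in
lemma Ioc_symmDiff_Ioc {a b c : ℝ} (hab : a ≤ b) (hbc : b ≤ c) :
    Ioc a c ∆ Ioc b c = Ioc a b := by
  ext x
  simp only [Set.mem_symmDiff, mem_Ioc]
  constructor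
  · rintro (⟨⟨h1, h2⟩, h3⟩ | ⟨⟨h1, h2⟩, h3⟩)
    · constructor
      · exact h1
      · by_contra hx; push_neg at hx; exact h3 ⟨hx, h2⟩
    · exact absurd ⟨lt_of_le_of_lt hab h1, h2⟩ h3
  · rintro ⟨h1, h2⟩
    left
    exact ⟨⟨h1, le_trans h2 hbc⟩, fun h => absurd h2 (not_le.2 h.1)⟩

open Set in
lemma core (g₁ g₂ : ℝ → ℝ) (hm₁ : Monotone g₁) (hm₂ : Monotone g₂)
    (hr₁ : ∀ t ∈ Set.Icc (0:ℝ) 1, g₁ t ∈ Set.Icc (0:ℝ) 1)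
    (hr₂ : ∀ t ∈ Set.Icc (0:ℝ) 1, g₂ t ∈ Set.Icc (0:ℝ) 1)
    (h₁ : g₁ 1 = 1) (h₂ : g₂ 1 = 1) :
    (∫ t in Set.Icc (0:ℝ) 1, |g₁ t - g₂ t|) =
      ∫ t in Set.Icc (0:ℝ) 1, |genInv g₁ t - genInv g₂ t| := by
  set I : Set ℝ := Icc (0:ℝ) 1 with hI
  set A₁ : Set (ℝ × ℝ) := {p | p.2 < g₁ p.1} with hA₁def
  set A₂ : Set (ℝ × ℝ) := {p | p.2 < g₂ p.1} with hA₂def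
  set E : Set (ℝ × ℝ) := (I ×ˢ I) ∩ (A₁ ∆ A₂) with hEdef
  have hmA₁ : MeasurableSet A₁ :=
    measurableSet_lt measurable_snd (hm₁.measurable.comp measurable_fst)
  have hmA₂ : MeasurableSet A₂ :=
    measurableSet_lt measurable_snd (hm₂.measurable.comp measurable_fst)
  have hmE : MeasurableSet E := by
    refine (measurableSet_Icc.prod measurableSet_Icc).inter ?_
    rw [Set.symmDiff_def]
    exact (hmA₁.diff hmA₂).union (hmA₂.diff hmA₁)
  -- Step A: vertical slices
  have hsliceA : ∀ t : ℝ, volume (Prod.mk t ⁻¹' E) =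
      I.indicator (fun t => ENNReal.ofReal |g₁ t - g₂ t|) t := by
    intro t
    by_cases ht : t ∈ I
    · have hpre : Prod.mk t ⁻¹' E = I ∩ (Iio (g₁ t) ∆ Iio (g₂ t)) := by
        ext s
        simp only [hEdef, hA₁def, hA₂def, Set.mem_preimage, Set.mem_inter_iff,
          Set.mem_prod, Set.mem_symmDiff, Set.mem_setOf_eq, Set.mem_Iio, ht, true_and]
      rw [hpre, Set.indicator_of_mem ht]
      have key : ∀ a b : ℝ, a ∈ I → b ∈ I → a ≤ b →
          volume (I ∩ (Iio a ∆ Iio b)) = ENNReal.ofReal (b - a) := by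
        intro a b ha hb hab
        have h1 : Iio a ∆ Iio b = Ico a b := by
          ext x
          simp only [Set.mem_symmDiff, Set.mem_Iio, Set.mem_Ico]
          constructor
          · rintro (⟨h1, h2⟩ | ⟨h1, h2⟩) <;> constructor <;> linarith
          · rintro ⟨h1, h2⟩
            right
            exact ⟨h2, not_lt.2 h1⟩
        have h2 : I ∩ Ico a b = Ico a b :=
          Set.inter_eq_self_of_subset_right
            (fun x hx => ⟨le_trans ha.1 hx.1, le_trans (le_of_lt hx.2) hb.2⟩)
        rw [h1, h2, Real.volume_Ico]
      rcases le_total (g₁ t) (g₂ t) with h | h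
      · rw [key _ _ (hr₁ t ht) (hr₂ t ht) h, abs_of_nonpos (by linarith), neg_sub]
      · rw [symmDiff_comm, key _ _ (hr₂ t ht) (hr₁ t ht) h, abs_of_nonneg (by linarith)]
    · have hpre : Prod.mk t ⁻¹' E = ∅ := by
        ext s
        simp only [hEdef, Set.mem_preimage, Set.mem_inter_iff, Set.mem_prod,
          Set.mem_empty_iff_false, iff_false, not_and]
        intro hmem
        exact absurd hmem.1 ht
      rw [hpre, Set.indicator_of_notMem ht]
      simp
  have hA : volume E = ∫⁻ t in I, ENNReal.ofReal |g₁ t - g₂ t| := by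
    rw [← lintegral_indicator measurableSet_Icc _]
    calc volume E = (volume.prod volume) E := by rw [← Measure.volume_eq_prod]
    _ = ∫⁻ t, volume (Prod.mk t ⁻¹' E) := Measure.prod_apply hmE
    _ = _ := by simp_rw [hsliceA]; rfl
  -- Step B: horizontal slices
  have hsliceB : ∀ s ∈ Ico (0:ℝ) 1, volume ((fun t => (t, s)) ⁻¹' E) =
      ENNReal.ofReal |genInv g₁ s - genInv g₂ s| := by
    intro s hs
    have hsI : s ∈ I := ⟨hs.1, hs.2.le⟩
    have hpre : (fun t => (t, s)) ⁻¹' E =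
        ({t | t ∈ I ∧ s < g₁ t}) ∆ ({t | t ∈ I ∧ s < g₂ t}) := by
      ext t
      simp only [hEdef, hA₁def, hA₂def, Set.mem_preimage, Set.mem_inter_iff, Set.mem_prod,
        Set.mem_symmDiff, Set.mem_setOf_eq, hsI, and_true]
      tauto
    set a₁ := genInv g₁ s with ha₁def
    set a₂ := genInv g₂ s with ha₂def
    have ha₁ : a₁ ∈ I := genInv_mem h₁ hs
    have ha₂ : a₂ ∈ I := genInv_mem h₂ hs
    obtain ⟨hsub₁, hsup₁⟩ := slice_sandwich hm₁ h₁ hs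
    obtain ⟨hsub₂, hsup₂⟩ := slice_sandwich hm₂ h₂ hs
    set C₁ := {t | t ∈ I ∧ s < g₁ t}
    set C₂ := {t | t ∈ I ∧ s < g₂ t}
    have hnull : volume ((C₁ ∆ C₂) ∆ (Ioc a₁ 1 ∆ Ioc a₂ 1)) = 0 := by
      have hCD : ∀ (C : Set ℝ) (a : ℝ), Ioc a 1 ⊆ C → C ⊆ Icc a 1 → C ∆ Ioc a 1 ⊆ {a} := by
        intro C a hlo hhi x hx
        rcases Set.mem_symmDiff.1 hx with ⟨hxC, hxn⟩ | ⟨hxIoc, hxn⟩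
        · have := hhi hxC
          simp only [Set.mem_Ioc, not_and] at hxn
          have hxa : x ≤ a := by
            by_contra hc
            push_neg at hc
            exact (hxn hc) this.2
          exact le_antisymm hxa this.1
        · exact absurd (hlo hxIoc) hxn
      have hsub : (C₁ ∆ C₂) ∆ (Ioc a₁ 1 ∆ Ioc a₂ 1) ⊆ {a₁} ∪ {a₂} := by
        rw [symmDiff_symmDiff_symmDiff_comm]
        refine Set.Subset.trans Set.symmDiff_subset_union ?_
        exact Set.union_subset_union (hCD C₁ a₁ hsub₁ hsup₁) (hCD C₂ a₂ hsub₂ hsup₂)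
      refine measure_mono_null hsub ?_
      rw [measure_union_null_iff]
      exact ⟨Real.volume_singleton, Real.volume_singleton⟩
    have hvol : volume (C₁ ∆ C₂) = volume (Ioc a₁ 1 ∆ Ioc a₂ 1) :=
      measure_congr (measure_symmDiff_eq_zero_iff.1 hnull)
    rw [hpre, hvol]
    rcases le_total a₁ a₂ with h | h
    · rw [Ioc_symmDiff_Ioc h ha₂.2, Real.volume_Ioc, abs_of_nonpos (by linarith), neg_sub]
    · rw [symmDiff_comm, Ioc_symmDiff_Ioc h ha₁.2, Real.volume_Ioc,
        abs_of_nonneg (by linarith)]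
  have hsliceB' : ∀ s : ℝ, s ∉ I → volume ((fun t => (t, s)) ⁻¹' E) = 0 := by
    intro s hsI
    have : (fun t => (t, s)) ⁻¹' E = ∅ := by
      ext t
      simp only [hEdef, Set.mem_preimage, Set.mem_inter_iff, Set.mem_prod,
        Set.mem_empty_iff_false, iff_false, not_and]
      intro hmem
      exact absurd hmem.2 hsI
    rw [this]
    simp
  have hB : volume E = ∫⁻ s in I, ENNReal.ofReal |genInv g₁ s - genInv g₂ s| := by
    rw [← lintegral_indicator measurableSet_Icc _]
    calc volume E = (volume.prod volume) E := by rw [← Measure.volume_eq_prod]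
    _ = ∫⁻ s, volume ((fun t => (t, s)) ⁻¹' E) := Measure.prod_apply_symm hmE
    _ = _ := by
        refine lintegral_congr_ae ?_
        have hone : ∀ᵐ s : ℝ, s ≠ (1:ℝ) := by
          rw [Filter.eventually_iff, mem_ae_iff]
          have : {s : ℝ | s ≠ 1}ᶜ = {1} := by ext x; simp
          rw [this]
          exact Real.volume_singleton
        filter_upwards [hone] with s hsne
        by_cases hsI : s ∈ I
        · rw [Set.indicator_of_mem hsI]
          exact hsliceB s ⟨hsI.1, lt_of_le_of_ne hsI.2 hsne⟩
        · rw [Set.indicator_of_notMem hsI]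
          exact hsliceB' s hsI
  -- genInv measurability
  have hgmono : ∀ (g : ℝ → ℝ), g 1 = 1 → MonotoneOn (genInv g) (Ico (0:ℝ) 1) := by
    intro g h1 s hsmem s' hs'mem hss'
    have hne' : ({u : ℝ | u ∈ Icc (0:ℝ) 1 ∧ s' < g u}).Nonempty :=
      ⟨1, ⟨zero_le_one, le_refl 1⟩, by rw [h1]; exact hs'mem.2⟩
    refine csInf_le_csInf ⟨0, fun x hx => hx.1.1⟩ hne' ?_
    rintro u ⟨huI, hu⟩
    exact ⟨huI, lt_of_le_of_lt hss' hu⟩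
  have hmeas : ∀ (g : ℝ → ℝ), g 1 = 1 →
      AEMeasurable (genInv g) (volume.restrict I) := by
    intro g h1
    rw [hI, ← Measure.restrict_congr_set Ico_ae_eq_Icc]
    exact aemeasurable_restrict_of_monotoneOn measurableSet_Ico (hgmono g h1)
  -- put it together
  have e₁ : (∫ t in I, |g₁ t - g₂ t|) =
      (∫⁻ t in I, ENNReal.ofReal |g₁ t - g₂ t|).toReal := by
    refine integral_eq_lintegral_of_nonneg_ae (Filter.Eventually.of_forall fun t => abs_nonneg _) ?_
    exact ((hm₁.measurable.sub hm₂.measurable).abs).aestronglyMeasurable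
  have e₂ : (∫ t in I, |genInv g₁ t - genInv g₂ t|) =
      (∫⁻ t in I, ENNReal.ofReal |genInv g₁ t - genInv g₂ t|).toReal := by
    refine integral_eq_lintegral_of_nonneg_ae (Filter.Eventually.of_forall fun t => abs_nonneg _) ?_
    exact (continuous_abs.measurable.comp_aemeasurable ((hmeas g₁ h₁).sub (hmeas g₂ h₂))).aestronglyMeasurable
  rw [e₁, e₂, ← hA, ← hB]

open Set in
/-- For right-continuous nondecreasing `g₁, g₂ : [0,1] → [0,1]` (with `g(1)=1`), the `L¹`
distance between them equals the `L¹` distance between their generalized inverses. -/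
theorem L1_dist_eq_L1_dist_genInv (g₁ g₂ : ℝ → ℝ)
    (hm₁ : MonotoneOn g₁ (Set.Icc 0 1)) (hm₂ : MonotoneOn g₂ (Set.Icc 0 1))
    (hrc₁ : ∀ t ∈ Set.Ico (0:ℝ) 1, ContinuousWithinAt g₁ (Set.Ici t) t)
    (hrc₂ : ∀ t ∈ Set.Ico (0:ℝ) 1, ContinuousWithinAt g₂ (Set.Ici t) t)
    (hr₁ : ∀ t ∈ Set.Icc (0:ℝ) 1, g₁ t ∈ Set.Icc (0:ℝ) 1)
    (hr₂ : ∀ t ∈ Set.Icc (0:ℝ) 1, g₂ t ∈ Set.Icc (0:ℝ) 1)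
    (h₁ : g₁ 1 = 1) (h₂ : g₂ 1 = 1) :
    (∫ t in Set.Icc (0:ℝ) 1, |g₁ t - g₂ t|) =
      ∫ t in Set.Icc (0:ℝ) 1, |genInv g₁ t - genInv g₂ t| := by
  set π : ℝ → ℝ := fun t => max 0 (min t 1) with hπdef
  have hπmem : ∀ t, π t ∈ Icc (0:ℝ) 1 :=
    fun t => ⟨le_max_left _ _, max_le zero_le_one (min_le_right _ _)⟩
  have hπmono : Monotone π :=
    fun a b hab => max_le_max (le_refl 0) (min_le_min hab (le_refl 1))
  have hπeq : ∀ t ∈ Icc (0:ℝ) 1, π t = t := by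
    intro t ht
    simp only [hπdef]
    rw [min_eq_left ht.2, max_eq_right ht.1]
  set G₁ : ℝ → ℝ := g₁ ∘ π with hG₁def
  set G₂ : ℝ → ℝ := g₂ ∘ π with hG₂def
  have hGm₁ : Monotone G₁ := fun a b hab => hm₁ (hπmem a) (hπmem b) (hπmono hab)
  have hGm₂ : Monotone G₂ := fun a b hab => hm₂ (hπmem a) (hπmem b) (hπmono hab)
  have hGeq₁ : ∀ t ∈ Icc (0:ℝ) 1, G₁ t = g₁ t := by
    intro t ht; simp only [hG₁def, Function.comp_apply, hπeq t ht]
  have hGeq₂ : ∀ t ∈ Icc (0:ℝ) 1, G₂ t = g₂ t := by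
    intro t ht; simp only [hG₂def, Function.comp_apply, hπeq t ht]
  have hGr₁ : ∀ t ∈ Icc (0:ℝ) 1, G₁ t ∈ Icc (0:ℝ) 1 := by
    intro t ht; rw [hGeq₁ t ht]; exact hr₁ t ht
  have hGr₂ : ∀ t ∈ Icc (0:ℝ) 1, G₂ t ∈ Icc (0:ℝ) 1 := by
    intro t ht; rw [hGeq₂ t ht]; exact hr₂ t ht
  have hG₁1 : G₁ 1 = 1 := by rw [hGeq₁ 1 ⟨zero_le_one, le_refl 1⟩]; exact h₁
  have hG₂1 : G₂ 1 = 1 := by rw [hGeq₂ 1 ⟨zero_le_one, le_refl 1⟩]; exact h₂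
  have hgi₁ : genInv G₁ = genInv g₁ := by
    funext t
    unfold genInv
    congr 1
    ext u
    simp only [Set.mem_setOf_eq, and_congr_right_iff]
    intro hu
    rw [hGeq₁ u hu]
  have hgi₂ : genInv G₂ = genInv g₂ := by
    funext t
    unfold genInv
    congr 1
    ext u
    simp only [Set.mem_setOf_eq, and_congr_right_iff]
    intro hu
    rw [hGeq₂ u hu]
  have hint : (∫ t in Icc (0:ℝ) 1, |g₁ t - g₂ t|) = ∫ t in Icc (0:ℝ) 1, |G₁ t - G₂ t| := by
    refine setIntegral_congr_fun measurableSet_Icc ?_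
    intro t ht
    dsimp only
    rw [hGeq₁ t ht, hGeq₂ t ht]
  rw [hint, ← hgi₁, ← hgi₂]
  exact core G₁ G₂ hGm₁ hGm₂ hGr₁ hGr₂ hG₁1 hG₂1
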